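/- arXiv:0707.1417 — 2 statements merged into one kernel-verified Lean document; each statement's English description precedes it below -/
import Mathlib

section
/- Let d ≥ 1, let C = (C_1,…,C_d) be a coisometric row contraction on H_C, A = (A_1,…,A_d) a row contraction on H_A, and let γ : H_A → ⊕^d H_C be a bounded operator whose range is contained in the kernel of the row operator of C and which is isometric on the range of D_{*,A} (i.e. ‖γ(D_{*,A} h)‖ = ‖D_{*,A} h‖ for all h ∈ H_A). Define B_i : H_C → H_A by B_i* = P_i ∘ γ ∘ D_{*,A}, where P_i : ⊕^d H_C → H_C is the i-th coordinate projection. Then E with block operators E_i = [[C_i, 0],[B_i, A_i]] on H_C ⊕ H_A satisfies ∑_{i=1}^d E_i E_i* = 1, i.e. E is a coisometric lifting of C by A. -/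
set_option synthInstance.maxHeartbeats 1000000
set_option maxHeartbeats 1000000
noncomputable section

open ContinuousLinearMap

variable {d : ℕ}
variable {H : Type*} [NormedAddCommGroup H] [InnerProductSpace ℂ H] [CompleteSpace H]

/-- The map Φ_T(X) = ∑ T_i X T_i^*. -/
def cpMap (T : Fin d → H →L[ℂ] H) (X : H →L[ℂ] H) : H →L[ℂ] H :=
  ∑ i, T i ∘L X ∘L adjoint (T i)

/-- Row contraction: ∑ T_i T_i^* ≤ 1. -/
def IsRowContraction (T : Fin d → H →L[ℂ] H) : Prop :=
  ∑ i, T i ∘L adjoint (T i) ≤ 1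

/-- The defect operator of T^*: D_{*,T} = (1 - ∑ T_i T_i^*)^(1/2). -/
def defectStar (T : Fin d → H →L[ℂ] H) : H →L[ℂ] H :=
  CFC.sqrt (1 - ∑ i, T i ∘L adjoint (T i))

/-- product T_α = T_{α₁} ⋯ T_{αₙ} over a word α. -/
def opWord (T : Fin d → H →L[ℂ] H) (α : List (Fin d)) : H →L[ℂ] H :=
  (α.map T).prod

/-- *-stable row contraction. -/
def IsStarStable (T : Fin d → H →L[ℂ] H) : Prop :=
  ∀ h : H, Filter.Tendsto
    (fun n : ℕ => ∑ α : Fin n → Fin d, ‖adjoint (opWord T (List.ofFn α)) h‖ ^ 2)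
    Filter.atTop (nhds 0)

instance piLpCompleteSpace {ι : Type*} (G : ι → Type*) [∀ i, NormedAddCommGroup (G i)]
    [∀ i, CompleteSpace (G i)] : CompleteSpace (PiLp 2 G) :=
  inferInstance

section Row

variable (d)

/-- The row operator of a tuple. -/
def rowOp (T : Fin d → H →L[ℂ] H) : PiLp 2 (fun _ : Fin d => H) →L[ℂ] H :=
  ∑ i, (T i) ∘L (ContinuousLinearMap.proj i) ∘L
    (PiLp.continuousLinearEquiv 2 ℂ (fun _ : Fin d => H)).toContinuousLinearMap

/-- The column operator with components (B i)^*. -/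
def colAdj {G : Type*} [NormedAddCommGroup G] [InnerProductSpace ℂ G] [CompleteSpace G]
    (B : Fin d → H →L[ℂ] G) : G →L[ℂ] PiLp 2 (fun _ : Fin d => H) :=
  ((PiLp.continuousLinearEquiv 2 ℂ (fun _ : Fin d => H)).symm.toContinuousLinearMap) ∘L
    (ContinuousLinearMap.pi (fun i => adjoint (B i)))

/-- The defect operator D_T = (1 - T^* T)^(1/2) of the row operator. -/
def defectRow (T : Fin d → H →L[ℂ] H) :
    PiLp 2 (fun _ : Fin d => H) →L[ℂ] PiLp 2 (fun _ : Fin d => H) :=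
  CFC.sqrt (1 - adjoint (rowOp d T) ∘L rowOp d T)

end Row

section Block

variable (HC HA : Type*) [NormedAddCommGroup HC] [InnerProductSpace ℂ HC] [CompleteSpace HC]
  [NormedAddCommGroup HA] [InnerProductSpace ℂ HA] [CompleteSpace HA]

/-- The Hilbert space direct sum H_C ⊕ H_A. -/
abbrev HilbSum := WithLp 2 (HC × HA)

variable {HC HA}

/-- The block operator [[X₁₁, X₁₂],[X₂₁, X₂₂]] on H_C ⊕ H_A. -/
def blockOp (X11 : HC →L[ℂ] HC) (X12 : HA →L[ℂ] HC)
    (X21 : HC →L[ℂ] HA) (X22 : HA →L[ℂ] HA) :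
    HilbSum HC HA →L[ℂ] HilbSum HC HA :=
  ((WithLp.prodContinuousLinearEquiv 2 ℂ HC HA).symm.toContinuousLinearMap) ∘L
    ((X11 ∘L fst ℂ HC HA + X12 ∘L snd ℂ HC HA).prod
      (X21 ∘L fst ℂ HC HA + X22 ∘L snd ℂ HC HA)) ∘L
    ((WithLp.prodContinuousLinearEquiv 2 ℂ HC HA).toContinuousLinearMap)

/-- Compression of an operator on H_C ⊕ H_A to H_C. -/
def comprC (X : HilbSum HC HA →L[ℂ] HilbSum HC HA) : HC →L[ℂ] HC :=
  (fst ℂ HC HA) ∘L ((WithLp.prodContinuousLinearEquiv 2 ℂ HC HA).toContinuousLinearMap) ∘L X ∘L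
    ((WithLp.prodContinuousLinearEquiv 2 ℂ HC HA).symm.toContinuousLinearMap) ∘L (inl ℂ HC HA)

end Block


/-- The i-th coordinate projection of the d-fold Hilbert space direct sum. -/
def projPiLp {H : Type*} [NormedAddCommGroup H] [InnerProductSpace ℂ H] [CompleteSpace H]
    {d : ℕ} (i : Fin d) : PiLp 2 (fun _ : Fin d => H) →L[ℂ] H :=
  (ContinuousLinearMap.proj i) ∘L
    (PiLp.continuousLinearEquiv 2 ℂ (fun _ : Fin d => H)).toContinuousLinearMap

variable {HC HA : Type*} [NormedAddCommGroup HC] [InnerProductSpace ℂ HC] [CompleteSpace HC]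
  [NormedAddCommGroup HA] [InnerProductSpace ℂ HA] [CompleteSpace HA]

section AuxBlock

lemma blockOp_fst (a : HC →L[ℂ] HC) (b : HA →L[ℂ] HC) (c : HC →L[ℂ] HA) (e : HA →L[ℂ] HA)
    (x : HilbSum HC HA) : (blockOp a b c e x).fst = a x.fst + b x.snd := rfl

lemma blockOp_snd (a : HC →L[ℂ] HC) (b : HA →L[ℂ] HC) (c : HC →L[ℂ] HA) (e : HA →L[ℂ] HA)
    (x : HilbSum HC HA) : (blockOp a b c e x).snd = c x.fst + e x.snd := rfl

lemma blockOp_one : (blockOp (1 : HC →L[ℂ] HC) 0 0 (1 : HA →L[ℂ] HA)) = 1 := by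
  ext x
  · exact WithLp.ofLp_injective 2 <| Prod.ext (by simp [blockOp_fst]) (by simp [blockOp_snd])

lemma adjoint_blockOp (a : HC →L[ℂ] HC) (b : HA →L[ℂ] HC) (c : HC →L[ℂ] HA) (e : HA →L[ℂ] HA) :
    adjoint (blockOp a b c e) = blockOp (adjoint a) (adjoint c) (adjoint b) (adjoint e) := by
  symm
  rw [eq_adjoint_iff]
  intro x y
  simp only [WithLp.prod_inner_apply, WithLp.ofLp_fst, WithLp.ofLp_snd, blockOp_fst, blockOp_snd, inner_add_left, inner_add_right,
    adjoint_inner_left]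
  ring

lemma blockOp_comp (a a' : HC →L[ℂ] HC) (b b' : HA →L[ℂ] HC) (c c' : HC →L[ℂ] HA)
    (e e' : HA →L[ℂ] HA) :
    blockOp a b c e ∘L blockOp a' b' c' e' =
      blockOp (a ∘L a' + b ∘L c') (a ∘L b' + b ∘L e') (c ∘L a' + e ∘L c')
        (c ∘L b' + e ∘L e') := by
  ext x
  · refine WithLp.ofLp_injective 2 (Prod.ext ?_ ?_) <;>
      · simp only [WithLp.ofLp_fst, WithLp.ofLp_snd, blockOp_fst, blockOp_snd, ContinuousLinearMap.comp_apply,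
          ContinuousLinearMap.add_apply, map_add]
        abel

lemma wlp_fst_sum {ι : Type*} (s : Finset ι) (f : ι → HilbSum HC HA) :
    (∑ i ∈ s, f i).fst = ∑ i ∈ s, (f i).fst :=
  map_sum (AddMonoidHom.mk' (fun y : HilbSum HC HA => y.fst) (fun _ _ => rfl)) f s

lemma wlp_snd_sum {ι : Type*} (s : Finset ι) (f : ι → HilbSum HC HA) :
    (∑ i ∈ s, f i).snd = ∑ i ∈ s, (f i).snd :=
  map_sum (AddMonoidHom.mk' (fun y : HilbSum HC HA => y.snd) (fun _ _ => rfl)) f s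

lemma blockOp_sum {ι : Type*} (s : Finset ι) (a : ι → (HC →L[ℂ] HC)) (b : ι → (HA →L[ℂ] HC))
    (c : ι → (HC →L[ℂ] HA)) (e : ι → (HA →L[ℂ] HA)) :
    ∑ i ∈ s, blockOp (a i) (b i) (c i) (e i) =
      blockOp (∑ i ∈ s, a i) (∑ i ∈ s, b i) (∑ i ∈ s, c i) (∑ i ∈ s, e i) := by
  ext x
  · refine WithLp.ofLp_injective 2 (Prod.ext ?_ ?_) <;>
      simp [Prod.fst_sum, Prod.snd_sum, ContinuousLinearMap.sum_apply, wlp_fst_sum, wlp_snd_sum,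
        blockOp_fst, blockOp_snd, Finset.sum_add_distrib]

end AuxBlock

/-- from a partial isometry `γ` into `ker(row C)` one obtains a coisometric
lifting via `B_i* = P_i ∘ γ ∘ D_{*,A}`. -/
theorem stmt3 {d : ℕ} (hd : 1 ≤ d)
    (C : Fin d → HC →L[ℂ] HC) (A : Fin d → HA →L[ℂ] HA) (B : Fin d → HC →L[ℂ] HA)
    (hC : ∑ i, C i ∘L adjoint (C i) = 1) (hA : IsRowContraction A)
    (γ : HA →L[ℂ] PiLp 2 (fun _ : Fin d => HC))
    (hker : ∀ x : HA, γ x ∈ LinearMap.ker (rowOp d C).toLinearMap)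
    (hiso : ∀ h : HA, ‖γ (defectStar A h)‖ = ‖defectStar A h‖)
    (hB : ∀ i, adjoint (B i) = projPiLp i ∘L γ ∘L defectStar A) :
    ∑ i, blockOp (C i) 0 (B i) (A i) ∘L adjoint (blockOp (C i) 0 (B i) (A i)) = 1 := by
  classical
  set D := defectStar A with hDdef
  have hA' : ∑ i, A i ∘L adjoint (A i) ≤ 1 := hA
  have hpos : (0 : HA →L[ℂ] HA) ≤ 1 - ∑ i, A i ∘L adjoint (A i) := sub_nonneg.mpr hA'
  have hDD : D ∘L D = 1 - ∑ i, A i ∘L adjoint (A i) := by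
    have h := CFC.sqrt_mul_sqrt_self (1 - ∑ i, A i ∘L adjoint (A i)) hpos
    rw [ContinuousLinearMap.mul_def] at h
    exact h
  have hDsa : IsSelfAdjoint D := IsSelfAdjoint.of_nonneg (CFC.sqrt_nonneg _)
  -- the row of C annihilates the range of γ
  have hrow : ∀ h : HA, ∑ i, C i ((γ h) i) = 0 := by
    intro h
    have h0 := hker h
    rw [LinearMap.mem_ker] at h0
    simpa [rowOp, ContinuousLinearMap.sum_apply] using h0
  have hCB : ∑ i, C i ∘L adjoint (B i) = 0 := by
    ext h
    simp only [ContinuousLinearMap.sum_apply, ContinuousLinearMap.comp_apply, hB,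
      ContinuousLinearMap.zero_apply]
    simpa [projPiLp] using hrow (D h)
  have hBC : ∑ i, B i ∘L adjoint (C i) = 0 := by
    have h1 : ∑ i, B i ∘L adjoint (C i) = adjoint (∑ i, C i ∘L adjoint (B i)) := by
      rw [map_sum]
      simp [adjoint_comp, adjoint_adjoint]
    rw [h1, hCB]
    simp
  -- the gram identity from hiso
  have hiso2 : adjoint (γ ∘L D) ∘L (γ ∘L D) = D ∘L D := by
    have hz : ∀ x : HA,
        (inner ℂ (((adjoint (γ ∘L D) ∘L (γ ∘L D)) - D ∘L D) x) x : ℂ) = 0 := by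
      intro x
      have t1 : (inner ℂ ((adjoint (γ ∘L D) ∘L (γ ∘L D)) x) x : ℂ) = (‖γ (D x)‖ : ℂ) ^ 2 := by
        rw [ContinuousLinearMap.comp_apply, adjoint_inner_left]
        simp [inner_self_eq_norm_sq_to_K]
      have t2 : (inner ℂ ((D ∘L D) x) x : ℂ) = (‖D x‖ : ℂ) ^ 2 := by
        have h2 : (inner ℂ ((D ∘L D) x) x : ℂ) = inner ℂ (D x) (adjoint D x) := by
          rw [ContinuousLinearMap.comp_apply, ← adjoint_inner_right]
        rw [h2, hDsa.adjoint_eq, inner_self_eq_norm_sq_to_K]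
        norm_cast
      rw [ContinuousLinearMap.sub_apply, inner_sub_left, t1, t2, hiso x]
      ring
    have h0 := (inner_map_self_eq_zero
      (↑(adjoint (γ ∘L D) ∘L (γ ∘L D) - D ∘L D) : HA →ₗ[ℂ] HA)).mp (fun x => by
        simpa [inner_sub_left] using hz x)
    have h0' : adjoint (γ ∘L D) ∘L (γ ∘L D) - D ∘L D = 0 :=
      ContinuousLinearMap.coe_injective (by simpa using h0)
    exact sub_eq_zero.mp h0'
  have hBB : ∑ i, B i ∘L adjoint (B i) = 1 - ∑ i, A i ∘L adjoint (A i) := by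
    ext x
    apply ext_inner_right ℂ
    intro v
    calc (inner ℂ ((∑ i, B i ∘L adjoint (B i)) x) v : ℂ)
        = ∑ i, (inner ℂ ((γ (D x)) i) ((γ (D v)) i) : ℂ) := by
          simp only [ContinuousLinearMap.sum_apply, sum_inner,
            ContinuousLinearMap.comp_apply]
          refine Finset.sum_congr rfl fun i _ => ?_
          rw [← adjoint_inner_right, hB]
          simp [projPiLp]
      _ = (inner ℂ (γ (D x)) (γ (D v)) : ℂ) := (PiLp.inner_apply _ _).symm
      _ = (inner ℂ ((adjoint (γ ∘L D) ∘L (γ ∘L D)) x) v : ℂ) := by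
          rw [ContinuousLinearMap.comp_apply, adjoint_inner_left]
          simp
      _ = (inner ℂ ((1 - ∑ i, A i ∘L adjoint (A i)) x) v : ℂ) := by
          rw [hiso2, hDD]
  have key : ∀ i, blockOp (C i) 0 (B i) (A i) ∘L adjoint (blockOp (C i) 0 (B i) (A i))
      = blockOp (C i ∘L adjoint (C i)) (C i ∘L adjoint (B i)) (B i ∘L adjoint (C i))
          (B i ∘L adjoint (B i) + A i ∘L adjoint (A i)) := by
    intro i
    rw [adjoint_blockOp, blockOp_comp]
    congr 1 <;> simp
  calc ∑ i, blockOp (C i) 0 (B i) (A i) ∘L adjoint (blockOp (C i) 0 (B i) (A i))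
      = ∑ i, blockOp (C i ∘L adjoint (C i)) (C i ∘L adjoint (B i)) (B i ∘L adjoint (C i))
          (B i ∘L adjoint (B i) + A i ∘L adjoint (A i)) := by
        exact Finset.sum_congr rfl fun i _ => key i
    _ = blockOp (∑ i, C i ∘L adjoint (C i)) (∑ i, C i ∘L adjoint (B i))
          (∑ i, B i ∘L adjoint (C i))
          (∑ i, (B i ∘L adjoint (B i) + A i ∘L adjoint (A i))) := blockOp_sum _ _ _ _ _
    _ = blockOp 1 0 0 1 := by
        rw [hC, hCB, hBC, Finset.sum_add_distrib, hBB, sub_add_cancel]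
    _ = 1 := blockOp_one

end
end

section
/- Let d ≥ 1 and let E with block operators E_i = [[C_i, 0],[B_i, A_i]] on H_E = H_C ⊕ H_A be a coisometric lifting of the row contraction C by a *-stable row contraction A. If X ∈ B(H_E) is a fixed point of Φ_E and x = p_C X|_{H_C} ∈ B(H_C) is its compression, then Φ_E^n([[x,0],[0,0]]) converges to X in the strong operator topology as n → ∞. In particular two fixed points of Φ_E with the same compression to H_C are equal. -/
set_option synthInstance.maxHeartbeats 1000000
set_option maxHeartbeats 1000000
noncomputable section

open ContinuousLinearMap

variable {d : ℕ}
variable {H : Type*} [NormedAddCommGroup H] [InnerProductSpace ℂ H] [CompleteSpace H]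

variable {HC HA : Type*} [NormedAddCommGroup HC] [InnerProductSpace ℂ HC] [CompleteSpace HC]
  [NormedAddCommGroup HA] [InnerProductSpace ℂ HA] [CompleteSpace HA]

set_option linter.unusedSectionVars false
section AuxGeneral
open ContinuousLinearMap Filter

variable {d : ℕ} {H : Type*} [NormedAddCommGroup H] [InnerProductSpace ℂ H] [CompleteSpace H]

lemma opWord_nil (T : Fin d → H →L[ℂ] H) : opWord T [] = 1 := rfl

lemma opWord_cons (T : Fin d → H →L[ℂ] H) (i : Fin d) (l : List (Fin d)) :
    opWord T (i :: l) = T i ∘L opWord T l := by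
  simp only [opWord, List.map_cons, List.prod_cons]; rfl

lemma opWord_append (T : Fin d → H →L[ℂ] H) (l₁ l₂ : List (Fin d)) :
    opWord T (l₁ ++ l₂) = opWord T l₁ ∘L opWord T l₂ := by
  simp only [opWord, List.map_append, List.prod_append]; rfl

lemma sum_words_add {M : Type*} [AddCommMonoid M] {n m : ℕ} (g : (Fin (n + m) → Fin d) → M) :
    ∑ γ : Fin (n + m) → Fin d, g γ
      = ∑ α : Fin n → Fin d, ∑ β : Fin m → Fin d, g (Fin.append α β) :=
  calc ∑ γ : Fin (n + m) → Fin d, g γ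
      = ∑ p : (Fin n → Fin d) × (Fin m → Fin d), g (Fin.append p.1 p.2) :=
        (Fintype.sum_equiv (Fin.appendEquiv n m) _ _ (fun p => rfl)).symm
    _ = ∑ α : Fin n → Fin d, ∑ β : Fin m → Fin d, g (Fin.append α β) :=
        Fintype.sum_prod_type _

lemma sum_words_one {M : Type*} [AddCommMonoid M] (g : (Fin 1 → Fin d) → M) :
    ∑ β : Fin 1 → Fin d, g β = ∑ i : Fin d, g (fun _ => i) :=
  (Fintype.sum_equiv ((Equiv.funUnique (Fin 1) (Fin d)).symm) _ _ (fun i => rfl)).symm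

lemma ofFn_one (i : Fin d) : List.ofFn (fun _ : Fin 1 => i) = [i] := by
  simp [List.ofFn_succ]

lemma word_snoc (T : Fin d → H →L[ℂ] H) {n : ℕ} (α : Fin n → Fin d) (i : Fin d) :
    opWord T (List.ofFn (Fin.append α (fun _ : Fin 1 => i)))
      = opWord T (List.ofFn α) ∘L T i := by
  rw [List.ofFn_fin_append, opWord_append, ofFn_one, opWord_cons, opWord_nil]
  ext x; rfl

lemma adj_word_snoc (T : Fin d → H →L[ℂ] H) {n : ℕ} (α : Fin n → Fin d) (i : Fin d) (w : H) :
    adjoint (opWord T (List.ofFn (Fin.append α (fun _ : Fin 1 => i)))) w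
      = adjoint (T i) (adjoint (opWord T (List.ofFn α)) w) := by
  rw [word_snoc, ContinuousLinearMap.adjoint_comp]; rfl

lemma adj_opWord_append (T : Fin d → H →L[ℂ] H) {n m : ℕ} (α : Fin n → Fin d)
    (β : Fin m → Fin d) (w : H) :
    adjoint (opWord T (List.ofFn (Fin.append α β))) w
      = adjoint (opWord T (List.ofFn β)) (adjoint (opWord T (List.ofFn α)) w) := by
  rw [List.ofFn_fin_append, opWord_append, ContinuousLinearMap.adjoint_comp]; rfl

lemma cpMap_apply (T : Fin d → H →L[ℂ] H) (Y : H →L[ℂ] H) (v : H) :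
    cpMap T Y v = ∑ i, T i (Y (adjoint (T i) v)) := by
  simp [cpMap, ContinuousLinearMap.sum_apply]

lemma cpMap_sub (T : Fin d → H →L[ℂ] H) (Y Z : H →L[ℂ] H) :
    cpMap T (Y - Z) = cpMap T Y - cpMap T Z := by
  simp only [cpMap, ContinuousLinearMap.comp_sub, ContinuousLinearMap.sub_comp,
    Finset.sum_sub_distrib]

lemma iter_cpMap_sub (T : Fin d → H →L[ℂ] H) (Y Z : H →L[ℂ] H) (n : ℕ) :
    (cpMap T)^[n] (Y - Z) = (cpMap T)^[n] Y - (cpMap T)^[n] Z := by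
  induction n generalizing Y Z with
  | zero => simp
  | succ n ih => rw [Function.iterate_succ_apply, Function.iterate_succ_apply,
      Function.iterate_succ_apply, cpMap_sub, ih]

lemma iter_cpMap_fixed (T : Fin d → H →L[ℂ] H) (X : H →L[ℂ] H) (hX : cpMap T X = X) (n : ℕ) :
    (cpMap T)^[n] X = X := by
  induction n with
  | zero => simp
  | succ n ih => rw [Function.iterate_succ_apply, hX, ih]

lemma iter_cpMap_apply (T : Fin d → H →L[ℂ] H) (Y : H →L[ℂ] H) (n : ℕ) (v : H) :
    (cpMap T)^[n] Y v
      = ∑ α : Fin n → Fin d,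
          opWord T (List.ofFn α) (Y (adjoint (opWord T (List.ofFn α)) v)) := by
  induction n generalizing Y v with
  | zero =>
      rw [Function.iterate_zero, id_eq]
      rw [Fintype.sum_unique (fun α : Fin 0 → Fin d =>
        opWord T (List.ofFn α) (Y (adjoint (opWord T (List.ofFn α)) v)))]
      have h0 : List.ofFn (default : Fin 0 → Fin d) = [] := List.ofFn_zero
      rw [h0, opWord_nil]
      have h1 : (adjoint (1 : H →L[ℂ] H)) = 1 := by
        rw [ContinuousLinearMap.one_def, ContinuousLinearMap.adjoint_id]
      rw [h1]; rfl

  | succ n ih =>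
      rw [Function.iterate_succ_apply, ih]
      rw [sum_words_add (n := n) (m := 1) (fun γ : Fin (n + 1) → Fin d =>
        opWord T (List.ofFn γ) (Y (adjoint (opWord T (List.ofFn γ)) v)))]
      refine Finset.sum_congr rfl (fun α _ => ?_)
      rw [sum_words_one (fun β : Fin 1 → Fin d =>
        opWord T (List.ofFn (Fin.append α β)) (Y (adjoint (opWord T (List.ofFn (Fin.append α β))) v)))]
      rw [cpMap_apply, map_sum]
      refine Finset.sum_congr rfl (fun i _ => ?_)
      rw [word_snoc, ContinuousLinearMap.adjoint_comp]; rfl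

end AuxGeneral
section AuxGeneral3
set_option linter.unusedSectionVars false
open ContinuousLinearMap Filter

variable {d : ℕ} {H : Type*} [NormedAddCommGroup H] [InnerProductSpace ℂ H] [CompleteSpace H]

/-- Cauchy-Schwarz for a coisometric row: `‖∑ T j (y j)‖² ≤ ∑ ‖y j‖²`. -/
lemma norm_sum_row_le {ι : Type*} [Fintype ι] (T : ι → H →L[ℂ] H)
    (hT : ∀ w : H, ∑ j, ‖adjoint (T j) w‖ ^ 2 ≤ ‖w‖ ^ 2) (y : ι → H) :
    ‖∑ j, T j (y j)‖ ^ 2 ≤ ∑ j, ‖y j‖ ^ 2 := by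
  set S := ∑ j, T j (y j) with hS
  have h1 : ‖S‖ ^ 2 = ∑ j, RCLike.re (inner ℂ (y j) ((adjoint (T j)) S) : ℂ) := by
    rw [← @inner_self_eq_norm_sq ℂ]
    nth_rewrite 1 [hS]
    rw [sum_inner, map_sum]
    exact Finset.sum_congr rfl fun j _ => by
      rw [ContinuousLinearMap.adjoint_inner_right]
  have h3 : ‖S‖ ^ 2 ≤ ∑ j, ‖y j‖ * ‖adjoint (T j) S‖ := by
    rw [h1]; exact Finset.sum_le_sum fun j _ => re_inner_le_norm _ _
  have h4 : (∑ j, ‖y j‖ * ‖adjoint (T j) S‖) ^ 2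
      ≤ (∑ j, ‖y j‖ ^ 2) * (∑ j, ‖adjoint (T j) S‖ ^ 2) :=
    Finset.sum_mul_sq_le_sq_mul_sq _ _ _
  have h5 := hT S
  have hY : (0:ℝ) ≤ ∑ j, ‖y j‖ ^ 2 := Finset.sum_nonneg fun j _ => sq_nonneg _
  have hS0 : (0:ℝ) ≤ ‖S‖ ^ 2 := sq_nonneg _
  have hQ0 : (0:ℝ) ≤ ∑ j, ‖adjoint (T j) S‖ ^ 2 := Finset.sum_nonneg fun j _ => sq_nonneg _
  nlinarith [h3, h4, h5, hY, hS0, hQ0]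

/-- Minkowski inequality for finite ℓ² sums. -/
lemma sqrt_sum_add_le {ι : Type*} [Fintype ι] {V : Type*} [SeminormedAddCommGroup V]
    (a b : ι → V) :
    Real.sqrt (∑ j, ‖a j + b j‖ ^ 2)
      ≤ Real.sqrt (∑ j, ‖a j‖ ^ 2) + Real.sqrt (∑ j, ‖b j‖ ^ 2) := by
  set A := ∑ j, ‖a j‖ ^ 2 with hA
  set B := ∑ j, ‖b j‖ ^ 2 with hB
  have hA0 : (0:ℝ) ≤ A := Finset.sum_nonneg fun j _ => sq_nonneg _
  have hB0 : (0:ℝ) ≤ B := Finset.sum_nonneg fun j _ => sq_nonneg _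
  have hab : ∑ j, ‖a j‖ * ‖b j‖ ≤ Real.sqrt A * Real.sqrt B := by
    have h4 : (∑ j, ‖a j‖ * ‖b j‖) ^ 2 ≤ A * B := Finset.sum_mul_sq_le_sq_mul_sq _ _ _
    have h5 : (0:ℝ) ≤ ∑ j, ‖a j‖ * ‖b j‖ :=
      Finset.sum_nonneg fun j _ => mul_nonneg (norm_nonneg _) (norm_nonneg _)
    calc ∑ j, ‖a j‖ * ‖b j‖ = Real.sqrt ((∑ j, ‖a j‖ * ‖b j‖) ^ 2) := (Real.sqrt_sq h5).symm
      _ ≤ Real.sqrt (A * B) := Real.sqrt_le_sqrt h4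
      _ = Real.sqrt A * Real.sqrt B := Real.sqrt_mul hA0 _
  have key : ∑ j, ‖a j + b j‖ ^ 2 ≤ (Real.sqrt A + Real.sqrt B) ^ 2 := by
    have h1 : ∑ j, ‖a j + b j‖ ^ 2 ≤ ∑ j, (‖a j‖ ^ 2 + 2 * (‖a j‖ * ‖b j‖) + ‖b j‖ ^ 2) := by
      refine Finset.sum_le_sum fun j _ => ?_
      have := norm_add_le (a j) (b j)
      nlinarith [norm_nonneg (a j + b j), norm_nonneg (a j), norm_nonneg (b j)]
    have h2 : ∑ j, (‖a j‖ ^ 2 + 2 * (‖a j‖ * ‖b j‖) + ‖b j‖ ^ 2)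
        = A + 2 * (∑ j, ‖a j‖ * ‖b j‖) + B := by
      rw [Finset.sum_add_distrib, Finset.sum_add_distrib, Finset.mul_sum]
    have h6 := Real.sq_sqrt hA0
    have h7 := Real.sq_sqrt hB0
    nlinarith [h1, h2, hab, Real.sqrt_nonneg A, Real.sqrt_nonneg B]
  calc Real.sqrt (∑ j, ‖a j + b j‖ ^ 2) ≤ Real.sqrt ((Real.sqrt A + Real.sqrt B) ^ 2) :=
        Real.sqrt_le_sqrt key
    _ = Real.sqrt A + Real.sqrt B := Real.sqrt_sq (by positivity)

/-- one-step coisometry at the vector level. -/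
lemma coisometry_step (E : Fin d → H →L[ℂ] H) (hE : ∑ i, E i ∘L adjoint (E i) = 1) (w : H) :
    ∑ i, ‖adjoint (E i) w‖ ^ 2 = ‖w‖ ^ 2 := by
  have h1 : ∀ i : Fin d, ‖adjoint (E i) w‖ ^ 2
      = RCLike.re (inner ℂ w ((E i ∘L adjoint (E i)) w) : ℂ) := by
    intro i
    rw [← @inner_self_eq_norm_sq ℂ]
    congr 1
    rw [ContinuousLinearMap.comp_apply, ← ContinuousLinearMap.adjoint_inner_left (E i)]
  calc ∑ i, ‖adjoint (E i) w‖ ^ 2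
      = RCLike.re (inner ℂ w ((∑ i, E i ∘L adjoint (E i)) w) : ℂ) := by
        rw [ContinuousLinearMap.sum_apply, inner_sum, map_sum]
        exact Finset.sum_congr rfl fun i _ => h1 i
    _ = ‖w‖ ^ 2 := by rw [hE, ContinuousLinearMap.one_apply, @inner_self_eq_norm_sq ℂ]

/-- words of a coisometric row are coisometric. -/
lemma coisometry_word (E : Fin d → H →L[ℂ] H) (hE : ∑ i, E i ∘L adjoint (E i) = 1) (n : ℕ)
    (w : H) :
    ∑ α : Fin n → Fin d, ‖adjoint (opWord E (List.ofFn α)) w‖ ^ 2 = ‖w‖ ^ 2 := by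
  induction n generalizing w with
  | zero =>
      rw [Fintype.sum_unique (fun α : Fin 0 → Fin d => ‖adjoint (opWord E (List.ofFn α)) w‖ ^ 2)]
      have h0 : List.ofFn (default : Fin 0 → Fin d) = [] := List.ofFn_zero
      rw [h0, opWord_nil, ContinuousLinearMap.one_def, ContinuousLinearMap.adjoint_id]
      rfl
  | succ n ih =>
      rw [sum_words_add (n := n) (m := 1)
        (fun γ : Fin (n + 1) → Fin d => ‖adjoint (opWord E (List.ofFn γ)) w‖ ^ 2)]
      calc ∑ α : Fin n → Fin d, ∑ β : Fin 1 → Fin d,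
              ‖adjoint (opWord E (List.ofFn (Fin.append α β))) w‖ ^ 2
          = ∑ α : Fin n → Fin d, ∑ i : Fin d,
              ‖adjoint (E i) (adjoint (opWord E (List.ofFn α)) w)‖ ^ 2 := by
            refine Finset.sum_congr rfl fun α _ => ?_
            rw [sum_words_one (fun β : Fin 1 → Fin d =>
              ‖adjoint (opWord E (List.ofFn (Fin.append α β))) w‖ ^ 2)]
            exact Finset.sum_congr rfl fun i _ => by rw [adj_word_snoc]
        _ = ∑ α : Fin n → Fin d, ‖adjoint (opWord E (List.ofFn α)) w‖ ^ 2 :=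
            Finset.sum_congr rfl fun α _ => coisometry_step E hE _
        _ = ‖w‖ ^ 2 := ih w

end AuxGeneral3
section AuxBlock
set_option linter.unusedSectionVars false
open ContinuousLinearMap Filter

variable {d : ℕ}
variable {HC HA : Type*} [NormedAddCommGroup HC] [InnerProductSpace ℂ HC] [CompleteSpace HC]
  [NormedAddCommGroup HA] [InnerProductSpace ℂ HA] [CompleteSpace HA]

lemma blockOp_fst_s12 (X11 : HC →L[ℂ] HC) (X12 : HA →L[ℂ] HC) (X21 : HC →L[ℂ] HA)
    (X22 : HA →L[ℂ] HA) (w : HilbSum HC HA) :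
    (blockOp X11 X12 X21 X22 w).fst = X11 w.fst + X12 w.snd := rfl

lemma blockOp_snd_s12 (X11 : HC →L[ℂ] HC) (X12 : HA →L[ℂ] HC) (X21 : HC →L[ℂ] HA)
    (X22 : HA →L[ℂ] HA) (w : HilbSum HC HA) :
    (blockOp X11 X12 X21 X22 w).snd = X21 w.fst + X22 w.snd := rfl

lemma hilbSum_ext {x y : HilbSum HC HA} (h1 : x.fst = y.fst) (h2 : x.snd = y.snd) : x = y := by
  have : (WithLp.equiv 2 (HC × HA)) x = (WithLp.equiv 2 (HC × HA)) y := Prod.ext h1 h2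
  exact (WithLp.equiv 2 (HC × HA)).injective this

lemma normsq_hilbSum (w : HilbSum HC HA) : ‖w‖ ^ 2 = ‖w.fst‖ ^ 2 + ‖w.snd‖ ^ 2 := by
  rw [← @inner_self_eq_norm_sq ℂ, ← @inner_self_eq_norm_sq ℂ, ← @inner_self_eq_norm_sq ℂ,
    WithLp.prod_inner_apply, map_add, WithLp.ofLp_fst, WithLp.ofLp_snd]

lemma hs_norm_snd_le (w : HilbSum HC HA) : ‖w.snd‖ ≤ ‖w‖ := by
  refine le_of_sq_le_sq ?_ (norm_nonneg _)
  rw [normsq_hilbSum]; nlinarith [sq_nonneg ‖w.fst‖]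

lemma hs_norm_fst_le (w : HilbSum HC HA) : ‖w.fst‖ ≤ ‖w‖ := by
  refine le_of_sq_le_sq ?_ (norm_nonneg _)
  rw [normsq_hilbSum]; nlinarith [sq_nonneg ‖w.snd‖]

/-- the embedding of `HA`. -/
def JA : HA →L[ℂ] HilbSum HC HA :=
  ((WithLp.prodContinuousLinearEquiv 2 ℂ HC HA).symm.toContinuousLinearMap) ∘L (inr ℂ HC HA)

/-- the embedding of `HC`. -/
def JC : HC →L[ℂ] HilbSum HC HA :=
  ((WithLp.prodContinuousLinearEquiv 2 ℂ HC HA).symm.toContinuousLinearMap) ∘L (inl ℂ HC HA)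

@[simp] lemma JA_fst (a : HA) : (JA (HC := HC) a).fst = 0 := rfl
@[simp] lemma JA_snd (a : HA) : (JA (HC := HC) a).snd = a := rfl
@[simp] lemma JC_fst (c : HC) : (JC (HA := HA) c).fst = c := rfl
@[simp] lemma JC_snd (c : HC) : (JC (HA := HA) c).snd = 0 := rfl

lemma norm_JA (a : HA) : ‖(JA (HC := HC) a)‖ = ‖a‖ := by
  refine le_antisymm ?_ ?_
  · refine le_of_sq_le_sq ?_ (norm_nonneg _)
    rw [normsq_hilbSum]; simp
  · have := hs_norm_snd_le (JA (HC := HC) a); rwa [JA_snd] at this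

@[simp] lemma hs_add_fst (x y : HilbSum HC HA) : (x + y).fst = x.fst + y.fst := rfl
@[simp] lemma hs_add_snd (x y : HilbSum HC HA) : (x + y).snd = x.snd + y.snd := rfl
@[simp] lemma hs_sub_fst (x y : HilbSum HC HA) : (x - y).fst = x.fst - y.fst := rfl
@[simp] lemma hs_sub_snd (x y : HilbSum HC HA) : (x - y).snd = x.snd - y.snd := rfl

lemma decomp_hilbSum (w : HilbSum HC HA) : w = JC w.fst + JA w.snd := by
  refine hilbSum_ext ?_ ?_ <;> simp

lemma comprC_eq (X : HilbSum HC HA →L[ℂ] HilbSum HC HA) (c : HC) :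
    comprC X c = (X (JC c)).fst := rfl

lemma blockOp_comprC_apply (X : HilbSum HC HA →L[ℂ] HilbSum HC HA) (w : HilbSum HC HA) :
    blockOp (comprC X) 0 0 0 w = JC ((X (JC w.fst)).fst) := by
  refine hilbSum_ext ?_ ?_ <;> simp [blockOp_fst_s12, blockOp_snd_s12, comprC_eq]

/-- adjoint of a block operator. -/
lemma adjoint_blockOp_s12 (X11 : HC →L[ℂ] HC) (X12 : HA →L[ℂ] HC) (X21 : HC →L[ℂ] HA)
    (X22 : HA →L[ℂ] HA) :
    adjoint (blockOp X11 X12 X21 X22)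
      = blockOp (adjoint X11) (adjoint X21) (adjoint X12) (adjoint X22) := by
  symm
  rw [ContinuousLinearMap.eq_adjoint_iff]
  intro x y
  rw [WithLp.prod_inner_apply, WithLp.prod_inner_apply, WithLp.ofLp_fst, WithLp.ofLp_snd,
    WithLp.ofLp_fst, WithLp.ofLp_snd, WithLp.ofLp_fst, WithLp.ofLp_snd,
    WithLp.ofLp_fst, WithLp.ofLp_snd, blockOp_fst_s12, blockOp_snd_s12,
    blockOp_fst_s12, blockOp_snd_s12]
  simp only [inner_add_left, inner_add_right, ContinuousLinearMap.adjoint_inner_left]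
  ring

lemma adj_blockE_snd (C : Fin d → HC →L[ℂ] HC) (A : Fin d → HA →L[ℂ] HA)
    (B : Fin d → HC →L[ℂ] HA) (i : Fin d) (w : HilbSum HC HA) :
    ((adjoint (blockOp (C i) 0 (B i) (A i))) w).snd = adjoint (A i) w.snd := by
  rw [adjoint_blockOp_s12, blockOp_snd_s12]
  simp

lemma adj_wordE_snd (C : Fin d → HC →L[ℂ] HC) (A : Fin d → HA →L[ℂ] HA)
    (B : Fin d → HC →L[ℂ] HA) (l : List (Fin d)) (w : HilbSum HC HA) :
    ((adjoint (opWord (fun i => blockOp (C i) 0 (B i) (A i)) l)) w).snd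
      = adjoint (opWord A l) w.snd := by
  induction l generalizing w with
  | nil =>
      rw [opWord_nil, opWord_nil, ContinuousLinearMap.one_def, ContinuousLinearMap.adjoint_id,
        ContinuousLinearMap.one_def, ContinuousLinearMap.adjoint_id]
      rfl
  | cons i l ih =>
      rw [opWord_cons, opWord_cons, ContinuousLinearMap.adjoint_comp,
        ContinuousLinearMap.adjoint_comp, ContinuousLinearMap.comp_apply,
        ContinuousLinearMap.comp_apply, ih, adj_blockE_snd]

end AuxBlock
namespace Stmt12Aux
set_option linter.unusedSectionVars false
open ContinuousLinearMap Filter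

variable {d : ℕ}
variable {HC HA : Type*} [NormedAddCommGroup HC] [InnerProductSpace ℂ HC] [CompleteSpace HC]
  [NormedAddCommGroup HA] [InnerProductSpace ℂ HA] [CompleteSpace HA]

/-- The lifting tuple. -/
def E (C : Fin d → HC →L[ℂ] HC) (A : Fin d → HA →L[ℂ] HA) (B : Fin d → HC →L[ℂ] HA) :
    Fin d → HilbSum HC HA →L[ℂ] HilbSum HC HA :=
  fun i => blockOp (C i) 0 (B i) (A i)

variable (C : Fin d → HC →L[ℂ] HC) (A : Fin d → HA →L[ℂ] HA) (B : Fin d → HC →L[ℂ] HA)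

/-- adjoint word operator. -/
def Wd {k : ℕ} (α : Fin k → Fin d) : HilbSum HC HA →L[ℂ] HilbSum HC HA :=
  adjoint (opWord (E C A B) (List.ofFn α))

variable (X : HilbSum HC HA →L[ℂ] HilbSum HC HA) (v : HilbSum HC HA)

def qq (w : HilbSum HC HA) : ℕ → ℝ :=
  fun k => ∑ α : Fin k → Fin d, ‖(Wd C A B α w).snd‖ ^ 2

def tt : ℕ → ℝ := fun k => ∑ α : Fin k → Fin d, ‖X (Wd C A B α v)‖ ^ 2

def gg : ℕ → ℝ := fun k => ∑ α : Fin k → Fin d, ‖(X (Wd C A B α v)).snd‖ ^ 2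

def th : ℕ → ℝ :=
  fun k => ∑ α : Fin k → Fin d, ‖(X (Wd C A B α v) - Wd C A B α (X v)).snd‖ ^ 2

def sg : ℕ → ℕ → ℝ := fun n m =>
  ∑ α : Fin n → Fin d, ∑ β : Fin m → Fin d,
    ‖adjoint (opWord A (List.ofFn β)) ((X (Wd C A B α v) - Wd C A B α (X v)).snd)‖ ^ 2

section lemmas

variable (hE : ∑ i, E C A B i ∘L adjoint (E C A B i) = 1)
variable (hX : cpMap (E C A B) X = X)

lemma Wd_append {n m : ℕ} (α : Fin n → Fin d) (β : Fin m → Fin d) (w : HilbSum HC HA) :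
    Wd C A B (Fin.append α β) w = Wd C A B β (Wd C A B α w) :=
  adj_opWord_append _ α β w

lemma Wd_snd {k : ℕ} (α : Fin k → Fin d) (w : HilbSum HC HA) :
    (Wd C A B α w).snd = adjoint (opWord A (List.ofFn α)) w.snd :=
  adj_wordE_snd C A B _ w

include hE in
lemma coiso (k : ℕ) (w : HilbSum HC HA) :
    ∑ α : Fin k → Fin d, ‖Wd C A B α w‖ ^ 2 = ‖w‖ ^ 2 :=
  coisometry_word _ hE k w

include hE in
lemma rowCS {k : ℕ} (y : (Fin k → Fin d) → HilbSum HC HA) :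
    ‖∑ α : Fin k → Fin d, opWord (E C A B) (List.ofFn α) (y α)‖ ^ 2
      ≤ ∑ α : Fin k → Fin d, ‖y α‖ ^ 2 :=
  norm_sum_row_le _ (fun w => le_of_eq (coiso C A B hE k w)) y

lemma qq_tendsto (hstable : IsStarStable A) (w : HilbSum HC HA) :
    Tendsto (qq C A B w) atTop (nhds 0) := by
  have h : qq C A B w = fun k => ∑ α : Fin k → Fin d,
      ‖adjoint (opWord A (List.ofFn α)) w.snd‖ ^ 2 := by
    funext k
    exact Finset.sum_congr rfl fun α _ => by rw [Wd_snd]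
  rw [h]
  exact hstable w.snd

lemma tt_split (n m : ℕ) :
    tt C A B X v (n + m) = ∑ α : Fin n → Fin d, ∑ β : Fin m → Fin d,
      ‖X (Wd C A B β (Wd C A B α v))‖ ^ 2 := by
  rw [tt, sum_words_add (n := n) (m := m)
    (fun γ : Fin (n + m) → Fin d => ‖X (Wd C A B γ v)‖ ^ 2)]
  exact Finset.sum_congr rfl fun α _ => Finset.sum_congr rfl fun β _ => by rw [Wd_append]

include hE hX in
lemma key_id (m : ℕ) (u : HilbSum HC HA) :
    ∑ β : Fin m → Fin d, ‖X (Wd C A B β u) - Wd C A B β (X u)‖ ^ 2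
      = (∑ β : Fin m → Fin d, ‖X (Wd C A B β u)‖ ^ 2) - ‖X u‖ ^ 2 := by
  have expand : ∀ β : Fin m → Fin d, ‖X (Wd C A B β u) - Wd C A B β (X u)‖ ^ 2
      = ‖X (Wd C A B β u)‖ ^ 2
        - 2 * RCLike.re (inner ℂ (X (Wd C A B β u)) (Wd C A B β (X u)) : ℂ)
        + ‖Wd C A B β (X u)‖ ^ 2 := fun β => norm_sub_sq _ _
  rw [Finset.sum_congr rfl fun β _ => expand β, Finset.sum_add_distrib,
    Finset.sum_sub_distrib]
  have h2 : ∑ β : Fin m → Fin d, ‖Wd C A B β (X u)‖ ^ 2 = ‖X u‖ ^ 2 :=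
    coiso C A B hE m (X u)
  have h3 : ∑ β : Fin m → Fin d,
      2 * RCLike.re (inner ℂ (X (Wd C A B β u)) (Wd C A B β (X u)) : ℂ) = 2 * ‖X u‖ ^ 2 := by
    rw [← Finset.mul_sum]
    congr 1
    have h4 : ∀ β : Fin m → Fin d, (inner ℂ (X (Wd C A B β u)) (Wd C A B β (X u)) : ℂ)
        = inner ℂ (opWord (E C A B) (List.ofFn β) (X (adjoint (opWord (E C A B) (List.ofFn β)) u)))
            (X u) := fun β => ContinuousLinearMap.adjoint_inner_right _ _ _
    calc ∑ β : Fin m → Fin d, RCLike.re (inner ℂ (X (Wd C A B β u)) (Wd C A B β (X u)) : ℂ)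
        = RCLike.re (∑ β : Fin m → Fin d,
            (inner ℂ (X (Wd C A B β u)) (Wd C A B β (X u)) : ℂ)) := (map_sum _ _ _).symm
      _ = RCLike.re (inner ℂ ((cpMap (E C A B))^[m] X u) (X u) : ℂ) := by
            congr 1
            rw [Finset.sum_congr rfl fun β _ => h4 β, ← sum_inner, ← iter_cpMap_apply]
      _ = ‖X u‖ ^ 2 := by rw [iter_cpMap_fixed _ _ hX, @inner_self_eq_norm_sq ℂ]
  rw [h2, h3]
  ring

include hE hX in
lemma tt_mono : Monotone (tt C A B X v) := by
  have step : ∀ n m : ℕ, tt C A B X v n ≤ tt C A B X v (n + m) := by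
    intro n m
    rw [tt_split]
    refine Finset.sum_le_sum fun α _ => ?_
    have h := key_id C A B X hE hX m (Wd C A B α v)
    have h0 : (0:ℝ) ≤ ∑ β : Fin m → Fin d,
        ‖X (Wd C A B β (Wd C A B α v)) - Wd C A B β (X (Wd C A B α v))‖ ^ 2 :=
      Finset.sum_nonneg fun β _ => sq_nonneg _
    linarith
  intro a b hab
  obtain ⟨m, rfl⟩ := Nat.le.dest hab
  exact step a m

include hE in
lemma tt_bdd (k : ℕ) : tt C A B X v k ≤ ‖X‖ ^ 2 * ‖v‖ ^ 2 := by
  have h1 : tt C A B X v k ≤ ∑ α : Fin k → Fin d, ‖X‖ ^ 2 * ‖Wd C A B α v‖ ^ 2 := by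
    refine Finset.sum_le_sum fun α _ => ?_
    have := X.le_opNorm (Wd C A B α v)
    nlinarith [norm_nonneg (Wd C A B α v), norm_nonneg X, norm_nonneg (X (Wd C A B α v))]
  rw [← Finset.mul_sum, coiso C A B hE k v] at h1
  exact h1

end lemmas

end Stmt12Aux
namespace Stmt12Aux
set_option linter.unusedSectionVars false
open ContinuousLinearMap Filter

variable {d : ℕ}
variable {HC HA : Type*} [NormedAddCommGroup HC] [InnerProductSpace ℂ HC] [CompleteSpace HC]
  [NormedAddCommGroup HA] [InnerProductSpace ℂ HA] [CompleteSpace HA]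
variable (C : Fin d → HC →L[ℂ] HC) (A : Fin d → HA →L[ℂ] HA) (B : Fin d → HC →L[ℂ] HA)
variable (X : HilbSum HC HA →L[ℂ] HilbSum HC HA) (v : HilbSum HC HA)
variable (hE : ∑ i, E C A B i ∘L adjoint (E C A B i) = 1)
variable (hX : cpMap (E C A B) X = X)

lemma sq_norm_snd_le (w : HilbSum HC HA) : ‖w.snd‖ ^ 2 ≤ ‖w‖ ^ 2 := by
  have := hs_norm_snd_le w
  nlinarith [norm_nonneg w.snd, norm_nonneg w]

include hE hX in
lemma sqrt_th_le (n m : ℕ) :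
    Real.sqrt (th C A B X v (n + m))
      ≤ Real.sqrt (tt C A B X v (n + m) - tt C A B X v n)
        + Real.sqrt (sg C A B X v n m) := by
  have mink := sqrt_sum_add_le
    (fun p : (Fin n → Fin d) × (Fin m → Fin d) =>
      (X (Wd C A B p.2 (Wd C A B p.1 v)) - Wd C A B p.2 (X (Wd C A B p.1 v))).snd)
    (fun p : (Fin n → Fin d) × (Fin m → Fin d) =>
      adjoint (opWord A (List.ofFn p.2)) ((X (Wd C A B p.1 v) - Wd C A B p.1 (X v)).snd))
  have hval : ∀ (α : Fin n → Fin d) (β : Fin m → Fin d),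
      (X (Wd C A B (Fin.append α β) v) - Wd C A B (Fin.append α β) (X v)).snd
        = (X (Wd C A B β (Wd C A B α v)) - Wd C A B β (X (Wd C A B α v))).snd
          + adjoint (opWord A (List.ofFn β)) ((X (Wd C A B α v) - Wd C A B α (X v)).snd) := by
    intro α β
    rw [Wd_append, Wd_append]
    have h7 : X (Wd C A B β (Wd C A B α v)) - Wd C A B β (Wd C A B α (X v))
        = (X (Wd C A B β (Wd C A B α v)) - Wd C A B β (X (Wd C A B α v)))
          + Wd C A B β (X (Wd C A B α v) - Wd C A B α (X v)) := by
      rw [map_sub]; abel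
    rw [h7, hs_add_snd, Wd_snd]
  have split : th C A B X v (n + m)
      = ∑ p : (Fin n → Fin d) × (Fin m → Fin d),
          ‖(X (Wd C A B p.2 (Wd C A B p.1 v)) - Wd C A B p.2 (X (Wd C A B p.1 v))).snd
            + adjoint (opWord A (List.ofFn p.2))
                ((X (Wd C A B p.1 v) - Wd C A B p.1 (X v)).snd)‖ ^ 2 := by
    rw [th, sum_words_add (n := n) (m := m) (fun γ : Fin (n + m) → Fin d =>
      ‖(X (Wd C A B γ v) - Wd C A B γ (X v)).snd‖ ^ 2), Fintype.sum_prod_type]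
    exact Finset.sum_congr rfl fun α _ => Finset.sum_congr rfl fun β _ => by rw [hval α β]
  have hb2 : ∑ p : (Fin n → Fin d) × (Fin m → Fin d),
      ‖adjoint (opWord A (List.ofFn p.2))
        ((X (Wd C A B p.1 v) - Wd C A B p.1 (X v)).snd)‖ ^ 2 = sg C A B X v n m := by
    rw [sg]
    exact Fintype.sum_prod_type _
  have ha2 : ∑ p : (Fin n → Fin d) × (Fin m → Fin d),
      ‖(X (Wd C A B p.2 (Wd C A B p.1 v)) - Wd C A B p.2 (X (Wd C A B p.1 v))).snd‖ ^ 2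
        ≤ tt C A B X v (n + m) - tt C A B X v n := by
    have h8 : ∑ p : (Fin n → Fin d) × (Fin m → Fin d),
        ‖(X (Wd C A B p.2 (Wd C A B p.1 v)) - Wd C A B p.2 (X (Wd C A B p.1 v))).snd‖ ^ 2
          ≤ ∑ p : (Fin n → Fin d) × (Fin m → Fin d),
            ‖X (Wd C A B p.2 (Wd C A B p.1 v)) - Wd C A B p.2 (X (Wd C A B p.1 v))‖ ^ 2 :=
      Finset.sum_le_sum fun p _ => sq_norm_snd_le _
    have h9 : ∑ p : (Fin n → Fin d) × (Fin m → Fin d),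
        ‖X (Wd C A B p.2 (Wd C A B p.1 v)) - Wd C A B p.2 (X (Wd C A B p.1 v))‖ ^ 2
          = tt C A B X v (n + m) - tt C A B X v n := by
      rw [Fintype.sum_prod_type]
      have h10 : ∀ α : Fin n → Fin d,
          ∑ β : Fin m → Fin d,
            ‖X (Wd C A B β (Wd C A B α v)) - Wd C A B β (X (Wd C A B α v))‖ ^ 2
          = (∑ β : Fin m → Fin d, ‖X (Wd C A B β (Wd C A B α v))‖ ^ 2)
            - ‖X (Wd C A B α v)‖ ^ 2 := fun α => key_id C A B X hE hX m _
      rw [Finset.sum_congr rfl fun α _ => h10 α, Finset.sum_sub_distrib, ← tt_split]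
      rfl
    linarith
  calc Real.sqrt (th C A B X v (n + m))
      ≤ Real.sqrt (∑ p : (Fin n → Fin d) × (Fin m → Fin d),
          ‖(X (Wd C A B p.2 (Wd C A B p.1 v)) - Wd C A B p.2 (X (Wd C A B p.1 v))).snd‖ ^ 2)
        + Real.sqrt (∑ p : (Fin n → Fin d) × (Fin m → Fin d),
          ‖adjoint (opWord A (List.ofFn p.2))
            ((X (Wd C A B p.1 v) - Wd C A B p.1 (X v)).snd)‖ ^ 2) := by
        rw [split]; exact mink
    _ ≤ Real.sqrt (tt C A B X v (n + m) - tt C A B X v n)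
        + Real.sqrt (sg C A B X v n m) := by
        exact add_le_add (Real.sqrt_le_sqrt ha2) (le_of_eq (congrArg Real.sqrt hb2))

lemma sqrt_gg_le (k : ℕ) :
    Real.sqrt (gg C A B X v k)
      ≤ Real.sqrt (th C A B X v k) + Real.sqrt (qq C A B (X v) k) := by
  have mink := sqrt_sum_add_le
    (fun α : Fin k → Fin d => (X (Wd C A B α v) - Wd C A B α (X v)).snd)
    (fun α : Fin k → Fin d => (Wd C A B α (X v)).snd)
  have h1 : ∀ α : Fin k → Fin d, (X (Wd C A B α v)).snd
      = (X (Wd C A B α v) - Wd C A B α (X v)).snd + (Wd C A B α (X v)).snd := by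
    intro α; rw [← hs_add_snd, sub_add_cancel]
  have h2 : gg C A B X v k = ∑ α : Fin k → Fin d,
      ‖(X (Wd C A B α v) - Wd C A B α (X v)).snd + (Wd C A B α (X v)).snd‖ ^ 2 := by
    rw [gg]
    exact Finset.sum_congr rfl fun α _ => by rw [← h1]
  rw [h2]
  exact mink

include hE in
lemma rowNorm {k : ℕ} (y : (Fin k → Fin d) → HilbSum HC HA) :
    ‖∑ α : Fin k → Fin d, opWord (E C A B) (List.ofFn α) (y α)‖
      ≤ Real.sqrt (∑ α : Fin k → Fin d, ‖y α‖ ^ 2) := by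
  have h := rowCS C A B hE y
  have h2 := Real.sqrt_le_sqrt h
  rwa [Real.sqrt_sq (norm_nonneg _)] at h2

include hE hX in
lemma norm_diff_le (k : ℕ) :
    ‖(cpMap (E C A B))^[k] (blockOp (comprC X) 0 0 0) v - X v‖
      ≤ Real.sqrt (gg C A B X v k) + 2 * ‖X‖ * Real.sqrt (qq C A B v k) := by
  set X0 : HilbSum HC HA →L[ℂ] HilbSum HC HA := blockOp (comprC X) 0 0 0 with hX0
  have hfix : (cpMap (E C A B))^[k] X = X := iter_cpMap_fixed _ _ hX k
  have hdiff : (cpMap (E C A B))^[k] X0 v - X v = -(((cpMap (E C A B))^[k] (X - X0)) v) := by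
    rw [iter_cpMap_sub, hfix, ContinuousLinearMap.sub_apply]
    abel
  rw [hdiff, norm_neg]
  have hpt : ∀ u : HilbSum HC HA, (X - X0) u
      = JA ((X (JC u.fst)).snd) + X (JA u.snd) := by
    intro u
    rw [ContinuousLinearMap.sub_apply, hX0, blockOp_comprC_apply]
    have h5 : X u = X (JC u.fst) + X (JA u.snd) := by rw [← map_add, ← decomp_hilbSum]
    have h6 : X (JC u.fst) = JC ((X (JC u.fst)).fst) + JA ((X (JC u.fst)).snd) :=
      decomp_hilbSum _
    rw [h5]
    nth_rewrite 1 [h6]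
    abel
  rw [iter_cpMap_apply]
  have hsum : ∑ α : Fin k → Fin d,
      opWord (E C A B) (List.ofFn α) ((X - X0) (adjoint (opWord (E C A B) (List.ofFn α)) v))
      = (∑ α : Fin k → Fin d,
          opWord (E C A B) (List.ofFn α) (JA ((X (JC ((Wd C A B α v).fst))).snd)))
        + ∑ α : Fin k → Fin d,
          opWord (E C A B) (List.ofFn α) (X (JA ((Wd C A B α v).snd))) := by
    rw [← Finset.sum_add_distrib]
    refine Finset.sum_congr rfl fun α _ => ?_
    rw [← map_add, hpt]
    rfl
  rw [hsum]
  have hz : ‖∑ α : Fin k → Fin d,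
      opWord (E C A B) (List.ofFn α) (X (JA ((Wd C A B α v).snd)))‖
      ≤ ‖X‖ * Real.sqrt (qq C A B v k) := by
    refine le_trans (rowNorm C A B hE _) ?_
    have hb : ∑ α : Fin k → Fin d, ‖X (JA ((Wd C A B α v).snd))‖ ^ 2
        ≤ ‖X‖ ^ 2 * qq C A B v k := by
      rw [qq, Finset.mul_sum]
      refine Finset.sum_le_sum fun α _ => ?_
      have h11 : ‖X (JA ((Wd C A B α v).snd))‖ ≤ ‖X‖ * ‖(Wd C A B α v).snd‖ := by
        have := X.le_opNorm (JA ((Wd C A B α v).snd))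
        rwa [norm_JA] at this
      nlinarith [norm_nonneg (X (JA ((Wd C A B α v).snd))), norm_nonneg X,
        norm_nonneg ((Wd C A B α v).snd)]
    calc Real.sqrt (∑ α : Fin k → Fin d, ‖X (JA ((Wd C A B α v).snd))‖ ^ 2)
        ≤ Real.sqrt (‖X‖ ^ 2 * qq C A B v k) := Real.sqrt_le_sqrt hb
      _ = ‖X‖ * Real.sqrt (qq C A B v k) := by
          rw [Real.sqrt_mul (sq_nonneg _), Real.sqrt_sq (norm_nonneg _)]
  have hy : ‖∑ α : Fin k → Fin d,
      opWord (E C A B) (List.ofFn α) (JA ((X (JC ((Wd C A B α v).fst))).snd))‖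
      ≤ Real.sqrt (gg C A B X v k) + ‖X‖ * Real.sqrt (qq C A B v k) := by
    refine le_trans (rowNorm C A B hE _) ?_
    have hw : ∀ α : Fin k → Fin d,
        ‖JA (HC := HC) ((X (JC ((Wd C A B α v).fst))).snd)‖
          = ‖(X (Wd C A B α v)).snd + -((X (JA ((Wd C A B α v).snd))).snd)‖ := by
      intro α
      rw [norm_JA]
      congr 1
      have h12 : JC (HA := HA) ((Wd C A B α v).fst) = Wd C A B α v - JA ((Wd C A B α v).snd) := by
        nth_rewrite 2 [decomp_hilbSum (Wd C A B α v)]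
        abel
      rw [h12, map_sub, hs_sub_snd]
      abel
    have mink2 := sqrt_sum_add_le
      (fun α : Fin k → Fin d => (X (Wd C A B α v)).snd)
      (fun α : Fin k → Fin d => -((X (JA ((Wd C A B α v).snd))).snd))
    have hq : ∑ α : Fin k → Fin d, ‖-((X (JA ((Wd C A B α v).snd))).snd)‖ ^ 2
        ≤ ‖X‖ ^ 2 * qq C A B v k := by
      rw [qq, Finset.mul_sum]
      refine Finset.sum_le_sum fun α _ => ?_
      rw [norm_neg]
      have h13 : ‖(X (JA ((Wd C A B α v).snd))).snd‖ ≤ ‖X‖ * ‖(Wd C A B α v).snd‖ := by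
        refine le_trans (hs_norm_snd_le _) ?_
        have := X.le_opNorm (JA ((Wd C A B α v).snd))
        rwa [norm_JA] at this
      nlinarith [norm_nonneg ((X (JA ((Wd C A B α v).snd))).snd), norm_nonneg X,
        norm_nonneg ((Wd C A B α v).snd)]
    calc Real.sqrt (∑ α : Fin k → Fin d, ‖JA (HC := HC) ((X (JC ((Wd C A B α v).fst))).snd)‖ ^ 2)
        = Real.sqrt (∑ α : Fin k → Fin d,
            ‖(X (Wd C A B α v)).snd + -((X (JA ((Wd C A B α v).snd))).snd)‖ ^ 2) := by
          congr 1
          exact Finset.sum_congr rfl fun α _ => by rw [hw α]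
      _ ≤ Real.sqrt (∑ α : Fin k → Fin d, ‖(X (Wd C A B α v)).snd‖ ^ 2)
          + Real.sqrt (∑ α : Fin k → Fin d, ‖-((X (JA ((Wd C A B α v).snd))).snd)‖ ^ 2) := mink2
      _ ≤ Real.sqrt (gg C A B X v k) + ‖X‖ * Real.sqrt (qq C A B v k) := by
          gcongr
          · exact le_of_eq rfl
          · calc Real.sqrt (∑ α : Fin k → Fin d, ‖-((X (JA ((Wd C A B α v).snd))).snd)‖ ^ 2)
                ≤ Real.sqrt (‖X‖ ^ 2 * qq C A B v k) := Real.sqrt_le_sqrt hq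
              _ = ‖X‖ * Real.sqrt (qq C A B v k) := by
                  rw [Real.sqrt_mul (sq_nonneg _), Real.sqrt_sq (norm_nonneg _)]
  calc ‖(∑ α : Fin k → Fin d,
          opWord (E C A B) (List.ofFn α) (JA ((X (JC ((Wd C A B α v).fst))).snd)))
        + ∑ α : Fin k → Fin d,
          opWord (E C A B) (List.ofFn α) (X (JA ((Wd C A B α v).snd)))‖
      ≤ ‖∑ α : Fin k → Fin d,
          opWord (E C A B) (List.ofFn α) (JA ((X (JC ((Wd C A B α v).fst))).snd))‖
        + ‖∑ α : Fin k → Fin d,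
          opWord (E C A B) (List.ofFn α) (X (JA ((Wd C A B α v).snd)))‖ := norm_add_le _ _
    _ ≤ (Real.sqrt (gg C A B X v k) + ‖X‖ * Real.sqrt (qq C A B v k))
        + ‖X‖ * Real.sqrt (qq C A B v k) := add_le_add hy hz
    _ = Real.sqrt (gg C A B X v k) + 2 * ‖X‖ * Real.sqrt (qq C A B v k) := by ring

end Stmt12Aux
namespace Stmt12Aux
set_option linter.unusedSectionVars false
open ContinuousLinearMap Filter

variable {d : ℕ}
variable {HC HA : Type*} [NormedAddCommGroup HC] [InnerProductSpace ℂ HC] [CompleteSpace HC]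
  [NormedAddCommGroup HA] [InnerProductSpace ℂ HA] [CompleteSpace HA]
variable (C : Fin d → HC →L[ℂ] HC) (A : Fin d → HA →L[ℂ] HA) (B : Fin d → HC →L[ℂ] HA)
variable (X : HilbSum HC HA →L[ℂ] HilbSum HC HA) (v : HilbSum HC HA)
variable (hE : ∑ i, E C A B i ∘L adjoint (E C A B i) = 1)
variable (hX : cpMap (E C A B) X = X)

include hE hX in
lemma th_tendsto (hstable : IsStarStable A) :
    Tendsto (th C A B X v) atTop (nhds 0) := by
  rw [Metric.tendsto_atTop]
  intro ε hε
  have hmono := tt_mono C A B X v hE hX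
  have hbdd : BddAbove (Set.range (tt C A B X v)) := by
    refine ⟨‖X‖ ^ 2 * ‖v‖ ^ 2, ?_⟩
    rintro x ⟨k, rfl⟩
    exact tt_bdd C A B X v hE k
  set L := ⨆ k, tt C A B X v k with hL
  have htt : Tendsto (tt C A B X v) atTop (nhds L) := tendsto_atTop_ciSup hmono hbdd
  set δ := ε / 8 with hδ
  have hδ0 : 0 < δ := by positivity
  obtain ⟨N, hN⟩ := (Metric.tendsto_atTop.1 htt) δ hδ0
  have hσ : Tendsto (sg C A B X v N) atTop (nhds 0) := by
    have h0 := tendsto_finset_sum (f := fun (α : Fin N → Fin d) (m : ℕ) =>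
        ∑ β : Fin m → Fin d, ‖adjoint (opWord A (List.ofFn β))
          ((X (Wd C A B α v) - Wd C A B α (X v)).snd)‖ ^ 2)
      (Finset.univ) (fun α _ => hstable ((X (Wd C A B α v) - Wd C A B α (X v)).snd))
    have hz : (∑ _α : Fin N → Fin d, (0:ℝ)) = 0 := Finset.sum_const_zero
    rw [← hz]
    exact h0
  obtain ⟨M, hM⟩ := (Metric.tendsto_atTop.1 hσ) δ hδ0
  refine ⟨N + M, fun k hk => ?_⟩
  have hNk : N ≤ k := le_trans (Nat.le_add_right N M) hk
  obtain ⟨m, rfl⟩ := Nat.le.dest hNk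
  have hMm : M ≤ m := by omega
  -- tt (N+m) - tt N ≤ δ
  have h1 : tt C A B X v (N + m) ≤ L := le_ciSup hbdd (N + m)
  have h2 : dist (tt C A B X v N) L < δ := hN N le_rfl
  have h3 : tt C A B X v N ≤ tt C A B X v (N + m) := hmono (Nat.le_add_right N m)
  have h4 : tt C A B X v (N + m) - tt C A B X v N ≤ δ := by
    rw [Real.dist_eq, abs_lt] at h2
    linarith [h2.1, h2.2]
  have h5 : sg C A B X v N m ≤ δ := by
    have := hM m hMm
    rw [Real.dist_eq, abs_lt] at this
    linarith [this.1, this.2]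
  have h6 := sqrt_th_le C A B X v hE hX N m
  have h7 : Real.sqrt (th C A B X v (N + m)) ≤ 2 * Real.sqrt δ := by
    have s1 : Real.sqrt (tt C A B X v (N + m) - tt C A B X v N) ≤ Real.sqrt δ :=
      Real.sqrt_le_sqrt h4
    have s2 : Real.sqrt (sg C A B X v N m) ≤ Real.sqrt δ := Real.sqrt_le_sqrt h5
    linarith
  have hth0 : (0:ℝ) ≤ th C A B X v (N + m) := Finset.sum_nonneg fun α _ => sq_nonneg _
  have h8 : th C A B X v (N + m) ≤ 4 * δ := by
    have := Real.sq_sqrt hth0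
    have hsq := Real.sq_sqrt (le_of_lt hδ0)
    nlinarith [Real.sqrt_nonneg (th C A B X v (N + m)), Real.sqrt_nonneg δ]
  rw [Real.dist_eq, sub_zero, abs_of_nonneg hth0]
  rw [hδ] at h8
  linarith

include hE hX in
lemma gg_tendsto (hstable : IsStarStable A) :
    Tendsto (gg C A B X v) atTop (nhds 0) := by
  have hub : ∀ k, gg C A B X v k
      ≤ (Real.sqrt (th C A B X v k) + Real.sqrt (qq C A B (X v) k)) ^ 2 := by
    intro k
    have h1 := sqrt_gg_le C A B X v k
    have hgg0 : (0:ℝ) ≤ gg C A B X v k := Finset.sum_nonneg fun α _ => sq_nonneg _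
    have := Real.sq_sqrt hgg0
    nlinarith [Real.sqrt_nonneg (gg C A B X v k), Real.sqrt_nonneg (th C A B X v k),
      Real.sqrt_nonneg (qq C A B (X v) k)]
  have hlim : Tendsto (fun k => (Real.sqrt (th C A B X v k)
      + Real.sqrt (qq C A B (X v) k)) ^ 2) atTop (nhds 0) := by
    have h2 := (th_tendsto C A B X v hE hX hstable).sqrt
    have h3 := (qq_tendsto C A B hstable (X v)).sqrt
    have h4 := (h2.add h3).pow 2
    simpa using h4
  exact squeeze_zero (fun k => Finset.sum_nonneg fun α _ => sq_nonneg _) hub hlim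

/-- Main convergence statement. -/
lemma main_conv
    (hE' : ∑ i, blockOp (C i) 0 (B i) (A i) ∘L adjoint (blockOp (C i) 0 (B i) (A i)) = 1)
    (hstable : IsStarStable A)
    (hX' : cpMap (fun i => blockOp (C i) 0 (B i) (A i)) X = X)
    (w : HilbSum HC HA) :
    Tendsto (fun n : ℕ =>
        ((cpMap (fun i => blockOp (C i) 0 (B i) (A i)))^[n] (blockOp (comprC X) 0 0 0)) w)
      atTop (nhds (X w)) := by
  have hE : ∑ i, E C A B i ∘L adjoint (E C A B i) = 1 := hE'
  have hX : cpMap (E C A B) X = X := hX'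
  rw [tendsto_iff_norm_sub_tendsto_zero]
  have hb : ∀ k : ℕ, ‖(cpMap (E C A B))^[k] (blockOp (comprC X) 0 0 0) w - X w‖
      ≤ Real.sqrt (gg C A B X w k) + 2 * ‖X‖ * Real.sqrt (qq C A B w k) :=
    norm_diff_le C A B X w hE hX
  have hlim : Tendsto (fun k => Real.sqrt (gg C A B X w k)
      + 2 * ‖X‖ * Real.sqrt (qq C A B w k)) atTop (nhds 0) := by
    have h1 := (gg_tendsto C A B X w hE hX hstable).sqrt
    have h2 := ((qq_tendsto C A B hstable w).sqrt).const_mul (2 * ‖X‖)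
    have h3 := h1.add h2
    simpa using h3
  exact squeeze_zero (fun k => norm_nonneg _) hb hlim

end Stmt12Aux
/-- for a coisometric lifting by a *-stable `A`, every fixed point of `Φ_E`
is recovered from its compression as an SOT limit; fixed points with equal compressions
coincide. -/
theorem stmt12 {d : ℕ} (hd : 1 ≤ d)
    (C : Fin d → HC →L[ℂ] HC) (A : Fin d → HA →L[ℂ] HA) (B : Fin d → HC →L[ℂ] HA)
    (hC : IsRowContraction C) (hA : IsRowContraction A)
    (hE : ∑ i, blockOp (C i) 0 (B i) (A i) ∘L adjoint (blockOp (C i) 0 (B i) (A i)) = 1)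
    (hstable : IsStarStable A)
    (X : HilbSum HC HA →L[ℂ] HilbSum HC HA)
    (hX : cpMap (fun i => blockOp (C i) 0 (B i) (A i)) X = X) :
    (∀ v : HilbSum HC HA,
      Filter.Tendsto
        (fun n : ℕ =>
          ((cpMap (fun i => blockOp (C i) 0 (B i) (A i)))^[n]
            (blockOp (comprC X) 0 0 0)) v)
        Filter.atTop (nhds (X v))) ∧
    (∀ Y : HilbSum HC HA →L[ℂ] HilbSum HC HA,
      cpMap (fun i => blockOp (C i) 0 (B i) (A i)) Y = Y →
        comprC Y = comprC X → Y = X) := by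
  constructor
  · exact fun v => Stmt12Aux.main_conv C A B X hE hstable hX v
  · intro Y hY hcompr
    ext v
    have h1 := Stmt12Aux.main_conv C A B X hE hstable hX v
    have h2 := Stmt12Aux.main_conv C A B Y hE hstable hY v
    rw [hcompr] at h2
    exact tendsto_nhds_unique h2 h1

end
end
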